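/- Define S_0 = i[[[V_0,Λ_1],Λ_2],L_0], S_1 = i[[[V_1,Λ_2],Λ_0],L_1], S_2 = i[[[V_2,Λ_0],Λ_1],L_2] as operators on the complexified exterior algebra Λ*W⊗ℂ. Then S_0 + S_1 + S_2 = 0 on the 6-dimensional J-eigenspace V spanned by w_0∧w_1, w_0∧w_2, w_1∧w_2, w_0∧w_1∧w_2∧w̄_0, w_0∧w_1∧w_2∧w̄_1, w_0∧w_1∧w_2∧w̄_2. -/

import Mathlib

/-- Index set for the orthonormal basis `v_{ij}`, `i ∈ {1,2}`, `j ∈ {0,1,2}`: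
`(0, j)` stands for `v_{1j}` and `(1, j)` for `v_{2j}`. -/
abbrev Idx := Fin 2 × Fin 3

/-- A linear order key on the index set. -/
def key (a : Idx) : ℕ := a.1.val * 3 + a.2.val

noncomputable section

/-- Concrete model of the complexified exterior algebra `Λ*W ⊗ ℂ` of the
6-dimensional real inner product space `W` with orthonormal basis `v_{ij}`:
complex-valued functions on subsets of the index set, with the induced
Hermitian inner product (the wedge monomials in the `v_{ij}` are orthonormal). -/
abbrev EWc := EuclideanSpace ℂ (Finset Idx)

/-- The sign `(-1)^{#{b ∈ S | b < a}}`. -/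
def sgnc (a : Idx) (S : Finset Idx) : ℂ :=
  (-1 : ℂ) ^ (S.filter (fun b => key b < key a)).card

/-- `Eop a` is the wedge (exterior multiplication) operator with `v_a`. -/
def Eop (a : Idx) : Module.End ℂ EWc where
  toFun f := WithLp.toLp 2 (fun S => if a ∈ S then sgnc a (S.erase a) * f (S.erase a) else 0)
  map_add' f g := by
    ext S
    by_cases h : a ∈ S <;> simp [h, mul_add]
  map_smul' c f := by
    ext S
    by_cases h : a ∈ S <;> simp [h] <;> ring

/-- `Iop a` is the contraction operator with the vector dual to `v_a`. -/
def Iop (a : Idx) : Module.End ℂ EWc where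
  toFun f := WithLp.toLp 2 (fun S => if a ∈ S then 0 else sgnc a S * f (insert a S))
  map_add' f g := by
    ext S
    by_cases h : a ∈ S <;> simp [h, mul_add]
  map_smul' c f := by
    ext S
    by_cases h : a ∈ S <;> simp [h] <;> ring

/-- `J = Σ_j (E_{2j}I_{1j} - E_{1j}I_{2j})`: the (complexification of the)
derivation of `Λ*W` with `J(v_{1j}) = v_{2j}` and `J(v_{2j}) = -v_{1j}`. -/
def Jop : Module.End ℂ EWc :=
  ∑ j : Fin 3, (Eop (1, j) ∘ₗ Iop (0, j) - Eop (0, j) ∘ₗ Iop (1, j))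

/-- The vacuum (the unit `1 ∈ Λ⁰`). -/
def vac : EWc := WithLp.toLp 2 (fun S => if S = ∅ then 1 else 0)

/-- Wedge operator with `w_j = v_{1j} + i v_{2j}`. -/
def Ew (j : Fin 3) : Module.End ℂ EWc := Eop (0, j) + Complex.I • Eop (1, j)

/-- Wedge operator with `w̄_j = v_{1j} - i v_{2j}`. -/
def Ewb (j : Fin 3) : Module.End ℂ EWc := Eop (0, j) - Complex.I • Eop (1, j)

/-- Contraction operator `I_{w_j} = I_{1j} - i I_{2j}`. -/
def Iw (j : Fin 3) : Module.End ℂ EWc := Iop (0, j) - Complex.I • Iop (1, j)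

/-- Contraction operator `I_{w̄_j} = I_{1j} + i I_{2j}`. -/
def Iwb (j : Fin 3) : Module.End ℂ EWc := Iop (0, j) + Complex.I • Iop (1, j)

/-- The element `w_j = v_{1j} + i v_{2j}` of `Λ¹`. -/
def wv (j : Fin 3) : EWc := Ew j vac

/-- The element `w̄_j = v_{1j} - i v_{2j}` of `Λ¹`. -/
def wbv (j : Fin 3) : EWc := Ewb j vac

/-- `L_0, L_1, L_2`: wedge with `ω_D = v_{11}∧v_{12} + v_{21}∧v_{22}`,
`-ω_2 = -(v_{10}∧v_{12} + v_{20}∧v_{22})`, `ω_1 = v_{10}∧v_{11} + v_{20}∧v_{21}`. -/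
def Lop : Fin 3 → Module.End ℂ EWc
  | 0 => Eop (0, 1) ∘ₗ Eop (0, 2) + Eop (1, 1) ∘ₗ Eop (1, 2)
  | 1 => -(Eop (0, 0) ∘ₗ Eop (0, 2) + Eop (1, 0) ∘ₗ Eop (1, 2))
  | 2 => Eop (0, 0) ∘ₗ Eop (0, 1) + Eop (1, 0) ∘ₗ Eop (1, 1)

/-- `V_j`: wedge with the volume form `v_{1j} ∧ v_{2j}`. -/
def Vop (j : Fin 3) : Module.End ℂ EWc := Eop (0, j) ∘ₗ Eop (1, j)

/-- `Λ_j = L_j*`, Hermitian adjoint. -/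
def Λop (j : Fin 3) : Module.End ℂ EWc := LinearMap.adjoint (Lop j)

/-- `A_j = V_j*`, Hermitian adjoint. -/
def Aop (j : Fin 3) : Module.End ℂ EWc := LinearMap.adjoint (Vop j)

/-- `H_j = [L_j, Λ_j]`. -/
def Hop (j : Fin 3) : Module.End ℂ EWc := ⁅Lop j, Λop j⁆

/-- The six spanning elements `w_0∧w_1, w_0∧w_2, w_1∧w_2,
`w_0∧w_1∧w_2∧w̄_0, w_0∧w_1∧w_2∧w̄_1, w_0∧w_1∧w_2∧w̄_2`. -/
def vvGen : Fin 6 → EWc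
  | 0 => Ew 0 (Ew 1 vac)
  | 1 => Ew 0 (Ew 2 vac)
  | 2 => Ew 1 (Ew 2 vac)
  | 3 => Ew 0 (Ew 1 (Ew 2 (Ewb 0 vac)))
  | 4 => Ew 0 (Ew 1 (Ew 2 (Ewb 1 vac)))
  | 5 => Ew 0 (Ew 1 (Ew 2 (Ewb 2 vac)))

/-- The 6-dimensional subspace `V` of `Λ*W ⊗ ℂ`. -/
def VV : Submodule ℂ EWc := Submodule.span ℂ (Set.range vvGen)

/-- `S_0 = i[[[V_0,Λ_1],Λ_2],L_0]`, and cyclically. -/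
def Sop : Fin 3 → Module.End ℂ EWc
  | 0 => Complex.I • ⁅⁅⁅Vop 0, Λop 1⁆, Λop 2⁆, Lop 0⁆
  | 1 => Complex.I • ⁅⁅⁅Vop 1, Λop 2⁆, Λop 0⁆, Lop 1⁆
  | 2 => Complex.I • ⁅⁅⁅Vop 2, Λop 0⁆, Λop 1⁆, Lop 2⁆

/-! ### Auxiliary computable (Gaussian-integer) layer -/

abbrev GV := Finset Idx → GaussianInt

def Phi (f : GV) : EWc := WithLp.toLp 2 (fun S => GaussianInt.toComplex (f S))

def sgnZ (a : Idx) (S : Finset Idx) : GaussianInt :=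
  (-1 : GaussianInt) ^ (S.filter (fun b => key b < key a)).card

def EopZ (a : Idx) (f : GV) : GV :=
  fun S => if a ∈ S then sgnZ a (S.erase a) * f (S.erase a) else 0

def IopZ (a : Idx) (f : GV) : GV :=
  fun S => if a ∈ S then 0 else sgnZ a S * f (insert a S)

def imul (f : GV) : GV := fun S => (⟨0, 1⟩ : GaussianInt) * f S

lemma toComplex_sgnZ (a : Idx) (S : Finset Idx) :
    GaussianInt.toComplex (sgnZ a S) = sgnc a S := by
  simp [sgnZ, sgnc, map_pow]

lemma Phi_add (f g : GV) : Phi f + Phi g = Phi (f + g) := by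
  ext S
  show GaussianInt.toComplex (f S) + GaussianInt.toComplex (g S) = GaussianInt.toComplex (f S + g S)
  simp

lemma Phi_sub (f g : GV) : Phi f - Phi g = Phi (f - g) := by
  ext S
  show GaussianInt.toComplex (f S) - GaussianInt.toComplex (g S) = GaussianInt.toComplex (f S - g S)
  simp

lemma Phi_neg (f : GV) : -Phi f = Phi (-f) := by
  ext S
  show -GaussianInt.toComplex (f S) = GaussianInt.toComplex (-f S)
  simp

lemma Phi_smulI (f : GV) : Complex.I • Phi f = Phi (imul f) := by
  ext S
  show Complex.I * GaussianInt.toComplex (f S) = GaussianInt.toComplex (imul f S)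
  simp [imul, map_mul, GaussianInt.toComplex_def]

lemma Phi_zero : Phi 0 = 0 := by
  ext S; show GaussianInt.toComplex 0 = 0; simp

lemma Eop_Phi (a : Idx) (f : GV) : Eop a (Phi f) = Phi (EopZ a f) := by
  ext S
  show (if a ∈ S then sgnc a (S.erase a) * Phi f (S.erase a) else 0)
      = GaussianInt.toComplex (EopZ a f S)
  unfold EopZ
  split
  · simp [Phi, map_mul, toComplex_sgnZ]
  · simp

lemma Iop_Phi (a : Idx) (f : GV) : Iop a (Phi f) = Phi (IopZ a f) := by
  ext S
  show (if a ∈ S then 0 else sgnc a S * Phi f (insert a S))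
      = GaussianInt.toComplex (IopZ a f S)
  unfold IopZ
  split
  · simp
  · simp [Phi, map_mul, toComplex_sgnZ]

lemma conj_sgnc (a : Idx) (S : Finset Idx) : (starRingEnd ℂ) (sgnc a S) = sgnc a S := by
  simp [sgnc]

lemma adjoint_Eop (a : Idx) : LinearMap.adjoint (Eop a) = Iop a := by
  symm
  rw [LinearMap.eq_adjoint_iff]
  intro f g
  simp only [PiLp.inner_apply, RCLike.inner_apply', Iop, Eop, LinearMap.coe_mk, AddHom.coe_mk]
  rw [← Finset.sum_filter_add_sum_filter_not Finset.univ (fun S => a ∈ S),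
      ← Finset.sum_filter_add_sum_filter_not Finset.univ (fun S => a ∈ S)
        (f := fun S => (starRingEnd ℂ) (f S) * _)]
  have h1 : ∑ S ∈ Finset.univ.filter (fun S => a ∈ S),
      (starRingEnd ℂ) (if a ∈ S then 0 else sgnc a S * f (insert a S)) * g S = 0 := by
    apply Finset.sum_eq_zero; intro S hS
    simp only [Finset.mem_filter] at hS
    simp [hS.2]
  have h2 : ∑ S ∈ Finset.univ.filter (fun S => ¬ a ∈ S),
      (starRingEnd ℂ) (f S) * (if a ∈ S then sgnc a (S.erase a) * g (S.erase a) else 0) = 0 := by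
    apply Finset.sum_eq_zero; intro S hS
    simp only [Finset.mem_filter] at hS
    simp [hS.2]
  rw [h1, h2, zero_add, add_zero]
  apply Finset.sum_nbij' (fun S => insert a S) (fun S => S.erase a)
  · intro S hS; simp only [Finset.mem_filter] at *; simp [hS.2]
  · intro S hS; simp only [Finset.mem_filter] at *; simp [hS.2]
  · intro S hS; simp only [Finset.mem_filter] at hS; simp [Finset.erase_insert hS.2]
  · intro S hS; simp only [Finset.mem_filter] at hS; simp [Finset.insert_erase hS.2]
  · intro S hS
    simp only [Finset.mem_filter] at hS
    rw [if_neg hS.2, if_pos (Finset.mem_insert_self a S), Finset.erase_insert hS.2]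
    rw [map_mul, conj_sgnc]
    ring

def LopZ : Fin 3 → GV → GV
  | 0 => fun f => EopZ (0,1) (EopZ (0,2) f) + EopZ (1,1) (EopZ (1,2) f)
  | 1 => fun f => -(EopZ (0,0) (EopZ (0,2) f) + EopZ (1,0) (EopZ (1,2) f))
  | 2 => fun f => EopZ (0,0) (EopZ (0,1) f) + EopZ (1,0) (EopZ (1,1) f)

def ΛopZ : Fin 3 → GV → GV
  | 0 => fun f => IopZ (0,2) (IopZ (0,1) f) + IopZ (1,2) (IopZ (1,1) f)
  | 1 => fun f => -(IopZ (0,2) (IopZ (0,0) f) + IopZ (1,2) (IopZ (1,0) f))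
  | 2 => fun f => IopZ (0,1) (IopZ (0,0) f) + IopZ (1,1) (IopZ (1,0) f)

def VopZ (j : Fin 3) : GV → GV := fun f => EopZ (0,j) (EopZ (1,j) f)

def brk (A B : GV → GV) : GV → GV := fun f => A (B f) - B (A f)

def SZ : Fin 3 → GV → GV
  | 0 => fun f => imul (brk (brk (brk (VopZ 0) (ΛopZ 1)) (ΛopZ 2)) (LopZ 0) f)
  | 1 => fun f => imul (brk (brk (brk (VopZ 1) (ΛopZ 2)) (ΛopZ 0)) (LopZ 1) f)
  | 2 => fun f => imul (brk (brk (brk (VopZ 2) (ΛopZ 0)) (ΛopZ 1)) (LopZ 2) f)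

lemma Lop_Phi (j : Fin 3) (f : GV) : Lop j (Phi f) = Phi (LopZ j f) := by
  fin_cases j <;>
    simp only [Lop, LopZ, LinearMap.add_apply, LinearMap.neg_apply, LinearMap.comp_apply,
      Eop_Phi, Phi_add, Phi_neg]

lemma Λop_Phi (j : Fin 3) (f : GV) : Λop j (Phi f) = Phi (ΛopZ j f) := by
  fin_cases j <;>
    simp only [Λop, Lop, ΛopZ, map_add, map_neg, LinearMap.adjoint_comp, adjoint_Eop,
      LinearMap.add_apply, LinearMap.neg_apply, LinearMap.comp_apply,
      Iop_Phi, Phi_add, Phi_neg]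

lemma Vop_Phi (j : Fin 3) (f : GV) : Vop j (Phi f) = Phi (VopZ j f) := by
  simp only [Vop, VopZ, LinearMap.comp_apply, Eop_Phi]

lemma brk_Phi {A B : Module.End ℂ EWc} {a b : GV → GV}
    (hA : ∀ f, A (Phi f) = Phi (a f)) (hB : ∀ f, B (Phi f) = Phi (b f)) :
    ∀ f, ⁅A, B⁆ (Phi f) = Phi (brk a b f) := by
  intro f
  simp only [Ring.lie_def, LinearMap.sub_apply, Module.End.mul_apply, hA, hB, Phi_sub]
  rfl

lemma Sop_Phi (j : Fin 3) (f : GV) : Sop j (Phi f) = Phi (SZ j f) := by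
  fin_cases j
  · simp only [Sop, SZ]
    rw [LinearMap.smul_apply,
        brk_Phi (brk_Phi (brk_Phi (Vop_Phi 0) (Λop_Phi 1)) (Λop_Phi 2)) (Lop_Phi 0) f,
        Phi_smulI]
  · simp only [Sop, SZ]
    rw [LinearMap.smul_apply,
        brk_Phi (brk_Phi (brk_Phi (Vop_Phi 1) (Λop_Phi 2)) (Λop_Phi 0)) (Lop_Phi 1) f,
        Phi_smulI]
  · simp only [Sop, SZ]
    rw [LinearMap.smul_apply,
        brk_Phi (brk_Phi (brk_Phi (Vop_Phi 2) (Λop_Phi 0)) (Λop_Phi 1)) (Lop_Phi 2) f,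
        Phi_smulI]

def EwZ (j : Fin 3) (f : GV) : GV := EopZ (0,j) f + imul (EopZ (1,j) f)
def EwbZ (j : Fin 3) (f : GV) : GV := EopZ (0,j) f - imul (EopZ (1,j) f)
def vacZ : GV := fun S => if S = ∅ then 1 else 0

def genZ : Fin 6 → GV
  | 0 => EwZ 0 (EwZ 1 vacZ)
  | 1 => EwZ 0 (EwZ 2 vacZ)
  | 2 => EwZ 1 (EwZ 2 vacZ)
  | 3 => EwZ 0 (EwZ 1 (EwZ 2 (EwbZ 0 vacZ)))
  | 4 => EwZ 0 (EwZ 1 (EwZ 2 (EwbZ 1 vacZ)))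
  | 5 => EwZ 0 (EwZ 1 (EwZ 2 (EwbZ 2 vacZ)))

lemma vac_Phi : vac = Phi vacZ := by
  ext S
  show (if S = ∅ then (1:ℂ) else 0) = GaussianInt.toComplex (vacZ S)
  unfold vacZ
  split <;> simp

lemma Ew_Phi (j : Fin 3) (f : GV) : Ew j (Phi f) = Phi (EwZ j f) := by
  simp only [Ew, EwZ, LinearMap.add_apply, LinearMap.smul_apply, Eop_Phi, Phi_smulI, Phi_add]

lemma Ewb_Phi (j : Fin 3) (f : GV) : Ewb j (Phi f) = Phi (EwbZ j f) := by
  simp only [Ewb, EwbZ, LinearMap.sub_apply, LinearMap.smul_apply, Eop_Phi, Phi_smulI, Phi_sub]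

lemma vvGen_Phi (i : Fin 6) : vvGen i = Phi (genZ i) := by
  fin_cases i <;>
    simp only [vvGen, genZ, vac_Phi, Ew_Phi, Ewb_Phi]

set_option maxRecDepth 1000000 in
set_option maxHeartbeats 4000000 in
lemma SZ_gen (i : Fin 6) : SZ 0 (genZ i) + SZ 1 (genZ i) + SZ 2 (genZ i) = 0 := by
  fin_cases i <;> decide

lemma S_gen (i : Fin 6) : (Sop 0 + Sop 1 + Sop 2) (vvGen i) = 0 := by
  rw [vvGen_Phi]
  simp only [LinearMap.add_apply, Sop_Phi, Phi_add]
  rw [SZ_gen i, Phi_zero]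

/-- `S_0 + S_1 + S_2 = 0` on the 6-dimensional `J`-eigenspace `V`. -/
theorem S_sum_zero_on_V : ∀ x ∈ VV, (Sop 0 + Sop 1 + Sop 2) x = 0 := by
  intro x hx
  induction hx using Submodule.span_induction with
  | mem x h => obtain ⟨i, rfl⟩ := h; exact S_gen i
  | zero => simp
  | add x y hx hy ihx ihy => rw [map_add, ihx, ihy, add_zero]
  | smul a x hx ih => rw [map_smul, ih, smul_zero]
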